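/- Let n ≥ 1 and m ≥ 1 be integers and fix x ∈ ℝⁿ. Then the function a ↦ E_{m,a}(x) is differentiable on (0, ∞), with derivative at each a > 0 equal to −(2π)^{−n} ∫_{ℝⁿ} ‖s‖^{2m} · exp(i⟨x,s⟩ − a‖s‖^{2m}) ds. -/

import Mathlib

open MeasureTheory Real Complex

noncomputable def heatKernel (n m : ℕ) (a : ℝ) (x : EuclideanSpace ℝ (Fin n)) : ℂ :=
  ((2 * Real.pi) ^ n : ℝ)⁻¹ •
    ∫ s : EuclideanSpace ℝ (Fin n),
      Complex.exp (Complex.I * ((inner ℝ x s : ℝ) : ℂ) - (a : ℂ) * ((‖s‖ : ℝ) : ℂ) ^ (2 * m))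

lemma exp_neg_le_one_add_pow {c : ℝ} (hc : 0 < c) (p : ℕ) (hp : 0 < p) {t : ℝ} (ht : 0 ≤ t) :
    Real.exp (-(c * t)) ≤ (max 1 (p / c)) ^ p * (1 + t) ^ (-(p : ℝ)) := by
  set K : ℝ := max 1 (p / c) with hK
  have hK1 : (1 : ℝ) ≤ K := le_max_left _ _
  have hp' : (0:ℝ) < p := by exact_mod_cast hp
  have hd : 0 < c / p := div_pos hc hp'
  have hKd : 1 ≤ K * (c / p) := by
    have h : (p : ℝ) / c ≤ K := le_max_right _ _
    calc (1:ℝ) = (p/c) * (c/p) := by field_simp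
    _ ≤ K * (c/p) := by gcongr
  have h0 : 1 + t ≤ K * Real.exp (c / p * t) := by
    calc 1 + t ≤ K * (1 + c / p * t) := by nlinarith
    _ ≤ K * Real.exp (c / p * t) := by
        have := Real.add_one_le_exp (c / p * t)
        have hK0 : (0:ℝ) ≤ K := by linarith
        nlinarith
  have h1 : Real.exp (-(c / p * t)) * (1 + t) ≤ K := by
    rw [Real.exp_neg, inv_mul_le_iff₀ (Real.exp_pos _)]
    linarith
  have h1t : (0:ℝ) < 1 + t := by linarith
  have hre : Real.exp (-(c * t)) = (Real.exp (-(c / p * t)) * (1 + t)) ^ p * ((1 + t) ^ p)⁻¹ := by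
    rw [mul_pow, ← Real.exp_nat_mul, mul_assoc, mul_inv_cancel₀ (by positivity), mul_one]
    congr 1
    field_simp
  rw [Real.rpow_neg h1t.le, Real.rpow_natCast, hre]
  gcongr

lemma integrable_exp_neg_norm_pow (n : ℕ) {c : ℝ} (hc : 0 < c) (k : ℕ) (hk : 1 ≤ k) :
    Integrable (fun s : EuclideanSpace ℝ (Fin n) => Real.exp (-(c * ‖s‖ ^ k))) := by
  have hfin : (Module.finrank ℝ (EuclideanSpace ℝ (Fin n)) : ℝ) < ((n + 1 : ℕ) : ℝ) := by
    rw [finrank_euclideanSpace_fin]; exact_mod_cast Nat.lt_succ_self n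
  have hint := (integrable_one_add_norm (E := EuclideanSpace ℝ (Fin n)) (μ := volume) hfin).const_mul
    (Real.exp c * (max 1 ((n + 1 : ℕ) / c)) ^ (n + 1))
  apply hint.mono'
  · apply Continuous.aestronglyMeasurable; fun_prop
  · filter_upwards with s
    rw [Real.norm_of_nonneg (Real.exp_pos _).le]
    have ht : (0:ℝ) ≤ ‖s‖ := norm_nonneg _
    have step1 : Real.exp (-(c * ‖s‖ ^ k)) ≤ Real.exp c * Real.exp (-(c * ‖s‖)) := by
      rw [← Real.exp_add]
      apply Real.exp_le_exp.mpr
      rcases le_total (‖s‖) 1 with h | h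
      · have : 0 ≤ ‖s‖ ^ k := by positivity
        nlinarith
      · have hpow : ‖s‖ ≤ ‖s‖ ^ k := le_self_pow₀ (by linarith) (by omega)
        nlinarith
    have step2 := exp_neg_le_one_add_pow hc (n + 1) (Nat.succ_pos n) ht
    calc Real.exp (-(c * ‖s‖ ^ k)) ≤ Real.exp c * Real.exp (-(c * ‖s‖)) := step1
      _ ≤ Real.exp c * ((max 1 ((n + 1 : ℕ) / c)) ^ (n + 1) * (1 + ‖s‖) ^ (-(((n+1:ℕ)) : ℝ))) := by
          gcongr
      _ = Real.exp c * (max 1 ((n + 1 : ℕ) / c)) ^ (n + 1) * (1 + ‖s‖) ^ (-(((n+1:ℕ)) : ℝ)) := by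
          ring

lemma integrable_pow_mul_exp_neg_norm_pow (n : ℕ) {c : ℝ} (hc : 0 < c) (k : ℕ) (hk : 1 ≤ k) :
    Integrable (fun s : EuclideanSpace ℝ (Fin n) => ‖s‖ ^ k * Real.exp (-(c * ‖s‖ ^ k))) := by
  have hint := (integrable_exp_neg_norm_pow n (half_pos hc) k hk).const_mul (2 / c)
  apply hint.mono'
  · apply Continuous.aestronglyMeasurable
    fun_prop
  · filter_upwards with s
    have hu : (0:ℝ) ≤ ‖s‖ ^ k := by positivity
    set u : ℝ := ‖s‖ ^ k
    rw [Real.norm_of_nonneg (by positivity)]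
    have h1 : u ≤ 2 / c * Real.exp (c / 2 * u) := by
      have := Real.add_one_le_exp (c / 2 * u)
      have he : 0 ≤ Real.exp (c/2*u) := (Real.exp_pos _).le
      rw [div_mul_eq_mul_div, le_div_iff₀ hc]
      nlinarith
    calc u * Real.exp (-(c * u)) ≤ (2 / c * Real.exp (c / 2 * u)) * Real.exp (-(c * u)) := by
          gcongr
      _ = 2 / c * Real.exp (-(c / 2 * u)) := by
          rw [mul_assoc, ← Real.exp_add]; ring_nf

lemma norm_cexp_aux (b t r : ℝ) (k : ℕ) (ht : 0 ≤ t) :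
    ‖Complex.exp (Complex.I * (r : ℂ) - (b : ℂ) * ((t : ℝ) : ℂ) ^ k)‖
      = Real.exp (-(b * t ^ k)) := by
  rw [Complex.norm_exp]
  congr 1
  simp [Complex.sub_re, Complex.mul_re, ← Complex.ofReal_pow]

set_option maxHeartbeats 1000000 in
theorem heatKernel_hasDerivAt_param (n m : ℕ) (hn : 1 ≤ n) (hm : 1 ≤ m)
    (x : EuclideanSpace ℝ (Fin n)) :
    ∀ a : ℝ, 0 < a →
      HasDerivAt (fun b : ℝ => heatKernel n m b x)
        (-(((2 * Real.pi) ^ n : ℝ)⁻¹ •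
          ∫ s : EuclideanSpace ℝ (Fin n),
            ((‖s‖ : ℝ) : ℂ) ^ (2 * m) *
              Complex.exp (Complex.I * ((inner ℝ x s : ℝ) : ℂ) -
                (a : ℂ) * ((‖s‖ : ℝ) : ℂ) ^ (2 * m)))) a := by
  intro a ha
  have hk : 1 ≤ 2 * m := by omega
  set F : ℝ → EuclideanSpace ℝ (Fin n) → ℂ := fun b s =>
    Complex.exp (Complex.I * ((inner ℝ x s : ℝ) : ℂ) - (b : ℂ) * ((‖s‖ : ℝ) : ℂ) ^ (2 * m))
    with hF
  set F' : ℝ → EuclideanSpace ℝ (Fin n) → ℂ := fun b s =>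
    -(((‖s‖ : ℝ) : ℂ) ^ (2 * m)) *
      Complex.exp (Complex.I * ((inner ℝ x s : ℝ) : ℂ) - (b : ℂ) * ((‖s‖ : ℝ) : ℂ) ^ (2 * m))
    with hF'
  have hcont : ∀ b : ℝ, Continuous (F b) := by
    intro b
    apply Complex.continuous_exp.comp
    apply Continuous.sub
    · exact continuous_const.mul
        (Complex.continuous_ofReal.comp (continuous_const.inner continuous_id))
    · exact continuous_const.mul ((Complex.continuous_ofReal.comp continuous_norm).pow _)
  have hcont' : ∀ b : ℝ, Continuous (F' b) := by
    intro b
    exact (((Complex.continuous_ofReal.comp continuous_norm).pow _).neg).mul (hcont b)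
  have key := hasDerivAt_integral_of_dominated_loc_of_deriv_le (μ := volume)
    (F := F) (F' := F') (x₀ := a)
    (bound := fun s => ‖s‖ ^ (2 * m) * Real.exp (-(a / 2 * ‖s‖ ^ (2 * m))))
    (Metric.ball_mem_nhds a (half_pos ha))
    (Filter.Eventually.of_forall fun b => (hcont b).aestronglyMeasurable)
    ?_ ((hcont' a).aestronglyMeasurable) ?_ ?_ ?_
  · have hderiv := key.2
    have hderiv2 : HasDerivAt (fun b : ℝ => heatKernel n m b x)
        ((((2 * Real.pi) ^ n : ℝ)⁻¹ : ℝ) • ∫ s, F' a s) a :=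
      hderiv.const_smul (((2 * Real.pi) ^ n : ℝ)⁻¹ : ℝ)
    convert hderiv2 using 1
    simp only [hF', neg_mul]
    rw [integral_neg, smul_neg]
  · -- integrability of F a
    apply (integrable_exp_neg_norm_pow n ha (2 * m) hk).mono'
      ((hcont a).aestronglyMeasurable)
    filter_upwards with s
    rw [norm_cexp_aux a ‖s‖ _ (2 * m) (norm_nonneg s)]
  · -- bound on F'
    filter_upwards with s b hb
    have hnorm : ‖F' b s‖ = ‖s‖ ^ (2 * m) * Real.exp (-(b * ‖s‖ ^ (2 * m))) := by
      rw [hF']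
      simp only [norm_mul, norm_neg]
      rw [norm_cexp_aux b ‖s‖ _ (2 * m) (norm_nonneg s)]
      congr 1
      rw [← Complex.ofReal_pow, Complex.norm_real, Real.norm_of_nonneg (by positivity)]
    rw [hnorm]
    have hb2 : a / 2 ≤ b := by
      rw [Metric.mem_ball, Real.dist_eq, abs_lt] at hb
      linarith
    gcongr
  · exact integrable_pow_mul_exp_neg_norm_pow n (half_pos ha) (2 * m) hk
  · -- differentiability
    filter_upwards with s b hb
    have h1 : HasDerivAt
        (fun z : ℂ => Complex.I * ((inner ℝ x s : ℝ) : ℂ) - z * ((‖s‖ : ℝ) : ℂ) ^ (2 * m))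
        (-(((‖s‖ : ℝ) : ℂ) ^ (2 * m))) (b : ℂ) := by
      simpa using ((hasDerivAt_id (b : ℂ)).mul_const (((‖s‖ : ℝ) : ℂ) ^ (2 * m))).const_sub
        (Complex.I * ((inner ℝ x s : ℝ) : ℂ))
    have h2 := (h1.cexp).comp_ofReal
    have h3 : F' b s = Complex.exp (Complex.I * ((inner ℝ x s : ℝ) : ℂ) - (b : ℂ) * ((‖s‖ : ℝ) : ℂ) ^ (2 * m)) * -(((‖s‖ : ℝ) : ℂ) ^ (2 * m)) := by
      rw [hF']
      ring
    rw [h3]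
    exact h2
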